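/- For the unit disc, M² · φ(Ω₀, M) = M² · π ∫₀¹ (1 − M/√(M² + (1−r)²)) r dr tends to π/24 as M → ∞. -/

import Mathlib

open Filter MeasureTheory

lemma aux_ratio (s : ℝ) (hs : 0 ≤ s) :
    Tendsto (fun M : ℝ => M / Real.sqrt (M ^ 2 + s ^ 2)) atTop (nhds 1) := by
  have h0 : Tendsto (fun M : ℝ => s ^ 2 / M ^ 2) atTop (nhds 0) :=
    tendsto_const_nhds.div_atTop (tendsto_pow_atTop two_ne_zero)
  have hadd : Tendsto (fun M : ℝ => 1 + s ^ 2 / M ^ 2) atTop (nhds (1 + 0)) :=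
    Tendsto.add tendsto_const_nhds h0
  have h1 : Tendsto (fun M : ℝ => Real.sqrt (1 + s ^ 2 / M ^ 2)) atTop (nhds 1) := by
    have := (Real.continuous_sqrt.tendsto (1 + 0)).comp hadd
    simpa [Function.comp_def] using this
  have h2 : Tendsto (fun M : ℝ => (Real.sqrt (1 + s ^ 2 / M ^ 2))⁻¹) atTop (nhds 1) := by
    simpa using h1.inv₀ one_ne_zero
  refine h2.congr' ?_
  filter_upwards [eventually_gt_atTop 0] with M hM
  have hq : Real.sqrt (M ^ 2 + s ^ 2) = M * Real.sqrt (1 + s ^ 2 / M ^ 2) := by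
    rw [← Real.sqrt_sq hM.le, ← Real.sqrt_mul (by positivity)]
    congr 1
    field_simp
    exact Real.sq_sqrt (by positivity)
  have hpos : 0 < Real.sqrt (1 + s ^ 2 / M ^ 2) := Real.sqrt_pos.2 (by positivity)
  rw [hq]
  field_simp

lemma aux_key (s : ℝ) (hs : 0 ≤ s) :
    Tendsto (fun M : ℝ => M ^ 2 * (1 - M / Real.sqrt (M ^ 2 + s ^ 2))) atTop
      (nhds (s ^ 2 / 2)) := by
  have h1 := aux_ratio s hs
  have h2 : Tendsto (fun M : ℝ => M / (Real.sqrt (M ^ 2 + s ^ 2) + M)) atTop (nhds (1 / 2)) := by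
    have hd : Tendsto (fun M : ℝ =>
        (M / Real.sqrt (M ^ 2 + s ^ 2)) / (1 + M / Real.sqrt (M ^ 2 + s ^ 2))) atTop
        (nhds (1 / (1 + 1))) := h1.div (tendsto_const_nhds.add h1) (by norm_num)
    have hd' : Tendsto (fun M : ℝ =>
        (M / Real.sqrt (M ^ 2 + s ^ 2)) / (1 + M / Real.sqrt (M ^ 2 + s ^ 2))) atTop
        (nhds (1 / 2)) := by convert hd using 2; norm_num
    refine hd'.congr' ?_
    filter_upwards [eventually_gt_atTop 0] with M hM
    have hq : 0 < Real.sqrt (M ^ 2 + s ^ 2) := Real.sqrt_pos.2 (by positivity)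
    have hqM : 0 < Real.sqrt (M ^ 2 + s ^ 2) + M := by linarith
    field_simp
  have hmul : Tendsto (fun M : ℝ =>
      s ^ 2 * ((M / Real.sqrt (M ^ 2 + s ^ 2)) * (M / (Real.sqrt (M ^ 2 + s ^ 2) + M))))
      atTop (nhds (s ^ 2 * (1 * (1 / 2)))) :=
    tendsto_const_nhds.mul (h1.mul h2)
  have hmul' : Tendsto (fun M : ℝ =>
      s ^ 2 * ((M / Real.sqrt (M ^ 2 + s ^ 2)) * (M / (Real.sqrt (M ^ 2 + s ^ 2) + M))))
      atTop (nhds (s ^ 2 / 2)) := by convert hmul using 1; ring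
  refine hmul'.congr' ?_
  filter_upwards [eventually_gt_atTop 0] with M hM
  have hq : 0 < Real.sqrt (M ^ 2 + s ^ 2) := Real.sqrt_pos.2 (by positivity)
  have hq2 : Real.sqrt (M ^ 2 + s ^ 2) ^ 2 = M ^ 2 + s ^ 2 :=
    Real.sq_sqrt (by positivity)
  have hqM : 0 < Real.sqrt (M ^ 2 + s ^ 2) + M := by linarith
  field_simp
  linear_combination (-1 : ℝ) * hq2

theorem stmt_14 :
    Tendsto (fun M : ℝ =>
        M ^ 2 * (Real.pi * ∫ r in (0:ℝ)..1, (1 - M / Real.sqrt (M ^ 2 + (1 - r) ^ 2)) * r))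
      atTop (nhds (Real.pi / 24)) := by
  set F : ℝ → ℝ → ℝ := fun M r => M ^ 2 * ((1 - M / Real.sqrt (M ^ 2 + (1 - r) ^ 2)) * r)
    with hF
  set G : ℝ → ℝ := fun r => (1 - r) ^ 2 / 2 * r with hG
  have hGint : ∫ r in Set.Ioc (0:ℝ) 1, G r = 1 / 24 := by
    rw [← intervalIntegral.integral_of_le zero_le_one]
    have hfe : Set.EqOn G (fun r => (1/2 : ℝ) * r - r ^ 2 + (1/2) * r ^ 3) (Set.uIcc 0 1) := by
      intro r _; simp only [hG]; ring
    rw [intervalIntegral.integral_congr hfe]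
    have i1 : IntervalIntegrable (fun r : ℝ => (1/2 : ℝ) * r) volume 0 1 := by
      apply Continuous.intervalIntegrable; continuity
    have i2 : IntervalIntegrable (fun r : ℝ => r ^ 2) volume 0 1 := by
      apply Continuous.intervalIntegrable; continuity
    have i3 : IntervalIntegrable (fun r : ℝ => (1/2 : ℝ) * r ^ 3) volume 0 1 := by
      apply Continuous.intervalIntegrable; continuity
    rw [intervalIntegral.integral_add (i1.sub i2) i3, intervalIntegral.integral_sub i1 i2,
      intervalIntegral.integral_const_mul, intervalIntegral.integral_const_mul]
    simp [integral_pow, integral_id]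
    norm_num
  have hmain : Tendsto (fun M => ∫ r in Set.Ioc (0:ℝ) 1, F M r) atTop
      (nhds (∫ r in Set.Ioc (0:ℝ) 1, G r)) := by
    apply tendsto_integral_filter_of_dominated_convergence (fun r => (1 - r) ^ 2 / 2 * r)
    · filter_upwards [eventually_gt_atTop 0] with M hM
      apply Continuous.aestronglyMeasurable
      have hden : ∀ r : ℝ, Real.sqrt (M ^ 2 + (1 - r) ^ 2) ≠ 0 := fun r =>
        (Real.sqrt_pos.2 (by positivity)).ne'
      have hc : Continuous fun r : ℝ => M / Real.sqrt (M ^ 2 + (1 - r) ^ 2) :=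
        continuous_const.div (by continuity) hden
      exact continuous_const.mul (((continuous_const.sub hc).mul continuous_id))
    · filter_upwards [eventually_gt_atTop 0] with M hM
      filter_upwards [ae_restrict_mem measurableSet_Ioc] with r hr
      obtain ⟨hr0, hr1⟩ := hr
      have hq : 0 < Real.sqrt (M ^ 2 + (1 - r) ^ 2) := Real.sqrt_pos.2 (by positivity)
      have hq2 : Real.sqrt (M ^ 2 + (1 - r) ^ 2) ^ 2 = M ^ 2 + (1 - r) ^ 2 :=
        Real.sq_sqrt (by positivity)
      have hqM : M ≤ Real.sqrt (M ^ 2 + (1 - r) ^ 2) := by nlinarith [sq_nonneg (1 - r)]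
      have hnn : 0 ≤ F M r := by
        have h1 : M / Real.sqrt (M ^ 2 + (1 - r) ^ 2) ≤ 1 := (div_le_one hq).2 hqM
        have h2 : 0 ≤ 1 - M / Real.sqrt (M ^ 2 + (1 - r) ^ 2) := by linarith
        simp only [hF]
        positivity
      rw [Real.norm_of_nonneg hnn]
      have hb : M ^ 2 * (1 - M / Real.sqrt (M ^ 2 + (1 - r) ^ 2)) ≤ (1 - r) ^ 2 / 2 := by
        set q := Real.sqrt (M ^ 2 + (1 - r) ^ 2) with hqd
        have e : M ^ 2 * (1 - M / q) = M ^ 2 * (q - M) / q := by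
          field_simp
        rw [e, div_le_div_iff₀ hq (by norm_num : (0:ℝ) < 2)]
        have h3 : 0 ≤ (q - M) * (q * (q + M) - 2 * M ^ 2) := by
          apply mul_nonneg (by linarith)
          nlinarith
        nlinarith [hq2]
      calc M ^ 2 * ((1 - M / Real.sqrt (M ^ 2 + (1 - r) ^ 2)) * r)
            = (M ^ 2 * (1 - M / Real.sqrt (M ^ 2 + (1 - r) ^ 2))) * r := by ring
        _ ≤ ((1 - r) ^ 2 / 2) * r := mul_le_mul_of_nonneg_right hb hr0.le
    · apply Continuous.integrableOn_Ioc; continuity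
    · filter_upwards [ae_restrict_mem measurableSet_Ioc] with r hr
      obtain ⟨hr0, hr1⟩ := hr
      have hs0 : (0:ℝ) ≤ 1 - r := by linarith
      have := (aux_key (1 - r) hs0).mul_const r
      simp only [hF, hG]
      convert this using 2 with M
      ring
  rw [hGint] at hmain
  have hfinal := hmain.const_mul Real.pi
  have heq : (fun M : ℝ =>
      M ^ 2 * (Real.pi * ∫ r in (0:ℝ)..1, (1 - M / Real.sqrt (M ^ 2 + (1 - r) ^ 2)) * r))
      = fun M => Real.pi * ∫ r in Set.Ioc (0:ℝ) 1, F M r := by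
    funext M
    have h1 : ∫ r in Set.Ioc (0:ℝ) 1, F M r
        = M ^ 2 * ∫ r in Set.Ioc (0:ℝ) 1, (1 - M / Real.sqrt (M ^ 2 + (1 - r) ^ 2)) * r :=
      integral_const_mul _ _
    rw [intervalIntegral.integral_of_le zero_le_one, h1]
    ring
  rw [heq]
  convert hfinal using 2
  ring
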